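/- An unbounded score yields a non-robust M-posterior: Let 𝒳 = ℝ, Θ ⊆ ℝ, and let ρ: ℝ×Θ→ℝ be a loss such that θ ↦ ρ(x,θ) is convex for every x and the score ψ(x,θ) = ∂ρ(x,θ)/∂θ satisfies lim_{x→+∞} ψ(x,θ) = +∞ and lim_{x→−∞} ψ(x,θ) = −∞ for every θ ∈ Θ. Assume the prior π is not degenerate (not concentrated at a single point), the M-posterior π_n^ρ(·|F_n) is well defined with finite first moment ∫_Θ |θ'| π_n^ρ(θ'|F_n)dθ' < ∞, and the posterior influence function PIF(x_0;θ,ρ,F_n) exists for all x_0, θ. Then the M-posterior is not uniformly B-robust: sup_{θ∈Θ} sup_{x_0∈ℝ} |PIF(x_0; θ, ρ, F_n)| = ∞. -/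

import Mathlib

open MeasureTheory Filter

/-- Unnormalized density of the `ε`-contaminated M-posterior (one-dimensional case). -/
noncomputable def contamNum {n : ℕ} (w : ℝ → ℝ) (ρ : ℝ → ℝ → ℝ)
    (X : Fin n → ℝ) (x₀ : ℝ) (ε : ℝ) (θ : ℝ) : ℝ :=
  w θ * Real.exp (-((1 - ε) * ∑ i, ρ (X i) θ + ε * n * ρ x₀ θ))

/-- Density of the `ε`-contaminated M-posterior `π_n^ρ(θ | F_{n,ε,x₀})`; at `ε = 0` this is the
M-posterior `π_n^ρ(θ | F_n)`. -/
noncomputable def contamPost {n : ℕ} (Θ : Set ℝ) (w : ℝ → ℝ) (ρ : ℝ → ℝ → ℝ)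
    (X : Fin n → ℝ) (x₀ : ℝ) (ε : ℝ) (θ : ℝ) : ℝ :=
  contamNum w ρ X x₀ ε θ / ∫ t in Θ, contamNum w ρ X x₀ ε t

/-- **An unbounded score yields a non-robust M-posterior.**
If `θ ↦ ρ(x,θ)` is convex for every `x`, the score `ψ(x,θ) = ∂ρ/∂θ` satisfies
`ψ(x,θ) → ±∞` as `x → ±∞` for every `θ`, the prior is nondegenerate, the M-posterior is well
defined with finite first moment, and the posterior influence function exists everywhere, then
the M-posterior is not uniformly B-robust: `sup_{θ∈Θ} sup_{x₀∈ℝ} |PIF(x₀;θ,ρ,F_n)| = ∞`. -/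
theorem unbounded_score_not_B_robust {n : ℕ} (hn : 0 < n)
    (Θ : Set ℝ) (X : Fin n → ℝ)
    (ρ ψ : ℝ → ℝ → ℝ)
    (hconv : ∀ x, ConvexOn ℝ Set.univ (ρ x))
    (hderiv : ∀ x θ, HasDerivAt (ρ x) (ψ x θ) θ)
    (hψtop : ∀ θ ∈ Θ, Tendsto (fun x => ψ x θ) atTop atTop)
    (hψbot : ∀ θ ∈ Θ, Tendsto (fun x => ψ x θ) atBot atBot)
    (w : ℝ → ℝ) (hw : ∀ θ, 0 ≤ w θ)
    (hnondeg : ∃ θ₁ ∈ Θ, ∃ θ₂ ∈ Θ, θ₁ ≠ θ₂ ∧ 0 < w θ₁ ∧ 0 < w θ₂)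
    (hwell : ∀ ε ∈ Set.Icc (0 : ℝ) 1, ∀ x₀ : ℝ,
      IntegrableOn (fun t => contamNum w ρ X x₀ ε t) Θ ∧
      0 < ∫ t in Θ, contamNum w ρ X x₀ ε t)
    (hmom : IntegrableOn (fun t => |t| * (w t * Real.exp (-∑ i, ρ (X i) t))) Θ)
    (PIF : ℝ → ℝ → ℝ)
    (hPIF : ∀ (x₀ : ℝ), ∀ θ ∈ Θ,
      HasDerivWithinAt (fun ε => contamPost Θ w ρ X x₀ ε θ) (PIF x₀ θ) (Set.Ici 0) 0) :
    ¬ ∃ C : ℝ, ∀ θ ∈ Θ, ∀ x₀ : ℝ, |PIF x₀ θ| ≤ C := by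
  rintro ⟨C, hC⟩
  -- reduce to the case `θa < θb`
  obtain ⟨θ₁, h₁Θ, θ₂, h₂Θ, hne, hw₁, hw₂⟩ := hnondeg
  have key : ∀ θa ∈ Θ, ∀ θb ∈ Θ, θa < θb → 0 < w θa → 0 < w θb → False := by
    intro θa haΘ θb hbΘ hab hwa hwb
    set S : ℝ → ℝ := fun θ => ∑ i, ρ (X i) θ with hS
    -- value of the contaminated numerator at ε = 0 does not depend on x₀
    have hnum0 : ∀ x₀ θ, contamNum w ρ X x₀ 0 θ = w θ * Real.exp (-(S θ)) := by
      intro x₀ θ; simp [contamNum, hS]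
    have hZ0 := (hwell 0 ⟨le_rfl, zero_le_one⟩ 0).2
    set Z0 : ℝ := ∫ t in Θ, w t * Real.exp (-(S t)) with hZ0def
    have hZ0pos : 0 < Z0 := by
      have : (∫ t in Θ, contamNum w ρ X 0 0 t) = Z0 := by
        apply integral_congr_ae
        filter_upwards with t using hnum0 0 t
      linarith [this ▸ hZ0]
    -- the posterior at ε = 0 does not depend on x₀
    set p : ℝ → ℝ := fun θ => w θ * Real.exp (-(S θ)) / Z0 with hp
    have hpost0 : ∀ x₀ θ, contamPost Θ w ρ X x₀ 0 θ = p θ := by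
      intro x₀ θ
      have hZeq : (∫ t in Θ, contamNum w ρ X x₀ 0 t) = Z0 := by
        apply integral_congr_ae
        filter_upwards with t using hnum0 x₀ t
      rw [contamPost, hnum0, hZeq]
    have hpa : 0 < p θa := div_pos (mul_pos hwa (Real.exp_pos _)) hZ0pos
    have hpb : 0 < p θb := div_pos (mul_pos hwb (Real.exp_pos _)) hZ0pos
    set g0 : ℝ := (w θa / w θb) * Real.exp (S θb - S θa) with hg0
    have hg0pos : 0 < g0 := mul_pos (div_pos hwa hwb) (Real.exp_pos _)
    set B : ℝ := (C * p θb + C * p θa) / (p θb) ^ 2 / g0 with hB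
    -- for every x₀, the log-derivative of the posterior ratio is bounded by B
    have hbound : ∀ x₀ : ℝ,
        |(S θa - S θb) + (n : ℝ) * (ρ x₀ θb - ρ x₀ θa)| ≤ B := by
      intro x₀
      set L : ℝ := (S θa - S θb) + (n : ℝ) * (ρ x₀ θb - ρ x₀ θa) with hL
      have hfa := hPIF x₀ θa haΘ
      have hfb := hPIF x₀ θb hbΘ
      have hfb0 : contamPost Θ w ρ X x₀ 0 θb ≠ 0 := by rw [hpost0]; exact hpb.ne'
      -- derivative of the ratio via the quotient rule
      have hq : HasDerivWithinAt
          (fun ε => contamPost Θ w ρ X x₀ ε θa / contamPost Θ w ρ X x₀ ε θb)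
          ((PIF x₀ θa * p θb - p θa * PIF x₀ θb) / (p θb) ^ 2) (Set.Ici 0) 0 := by
        have := hfa.div hfb hfb0
        rwa [hpost0, hpost0] at this
      -- explicit derivative of the ratio
      have hlin : HasDerivAt (fun ε : ℝ => (S θb - S θa) + ε * L) L 0 := by
        simpa using ((hasDerivAt_id (0:ℝ)).mul_const L).const_add (S θb - S θa)
      have hg : HasDerivAt (fun ε : ℝ => (w θa / w θb) * Real.exp ((S θb - S θa) + ε * L))
          (g0 * L) 0 := by
        have h2 := (hlin.exp).const_mul (w θa / w θb)
        simpa [hg0, mul_assoc] using h2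
      -- the ratio agrees with the explicit function on `Icc 0 1`
      have hEq : ∀ ε ∈ Set.Icc (0:ℝ) 1,
          contamPost Θ w ρ X x₀ ε θa / contamPost Θ w ρ X x₀ ε θb
            = (w θa / w θb) * Real.exp ((S θb - S θa) + ε * L) := by
        intro ε hε
        have hZ : (0:ℝ) < ∫ t in Θ, contamNum w ρ X x₀ ε t := (hwell ε hε x₀).2
        have hnb : (0:ℝ) < contamNum w ρ X x₀ ε θb :=
          mul_pos hwb (Real.exp_pos _)
        have hratio : contamPost Θ w ρ X x₀ ε θa / contamPost Θ w ρ X x₀ ε θb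
            = contamNum w ρ X x₀ ε θa / contamNum w ρ X x₀ ε θb := by
          rw [contamPost, contamPost]
          field_simp
        rw [hratio, contamNum, contamNum, mul_div_mul_comm, ← Real.exp_sub]
        congr 1
        simp only [hS, hL]
        ring
      have hmem : Set.Icc (0:ℝ) 1 ∈ nhdsWithin (0:ℝ) (Set.Ici 0) := by
        have h1 : Set.Iic (1:ℝ) ∈ nhds (0:ℝ) := Iic_mem_nhds one_pos
        have h2 := Filter.inter_mem
          (self_mem_nhdsWithin (a := (0:ℝ)) (s := Set.Ici 0))
          (mem_nhdsWithin_of_mem_nhds h1)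
        rwa [Set.Ici_inter_Iic] at h2
      have hq' : HasDerivWithinAt
          (fun ε => contamPost Θ w ρ X x₀ ε θa / contamPost Θ w ρ X x₀ ε θb)
          (g0 * L) (Set.Ici 0) 0 := by
        apply (hg.hasDerivWithinAt).congr_of_eventuallyEq
        · filter_upwards [hmem] with ε hε using hEq ε hε
        · exact hEq 0 ⟨le_rfl, zero_le_one⟩
      -- uniqueness of the derivative
      have hu : UniqueDiffWithinAt ℝ (Set.Ici (0:ℝ)) 0 :=
        uniqueDiffOn_Ici 0 0 Set.self_mem_Ici
      have heq : g0 * L = (PIF x₀ θa * p θb - p θa * PIF x₀ θb) / (p θb) ^ 2 := by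
        rw [← hq'.derivWithin hu, ← hq.derivWithin hu]
      -- bound
      have h1 : |PIF x₀ θa * p θb - p θa * PIF x₀ θb| ≤ C * p θb + C * p θa := by
        calc |PIF x₀ θa * p θb - p θa * PIF x₀ θb|
            ≤ |PIF x₀ θa * p θb| + |p θa * PIF x₀ θb| := abs_sub _ _
          _ = |PIF x₀ θa| * p θb + p θa * |PIF x₀ θb| := by
              rw [abs_mul, abs_mul, abs_of_pos hpa, abs_of_pos hpb]
          _ ≤ C * p θb + C * p θa := by
              have := hC θa haΘ x₀
              have := hC θb hbΘ x₀
              nlinarith [hpa, hpb]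
      have h2 : |g0 * L| ≤ (C * p θb + C * p θa) / (p θb) ^ 2 := by
        rw [heq, abs_div, abs_of_pos (pow_pos hpb 2)]
        exact div_le_div_of_nonneg_right h1 (pow_pos hpb 2).le |>.trans_eq rfl
      have h3 : g0 * |L| ≤ (C * p θb + C * p θa) / (p θb) ^ 2 := by
        rwa [abs_mul, abs_of_pos hg0pos] at h2
      rw [hB]
      rw [le_div_iff₀ hg0pos]
      linarith [h3]
    -- now pick x₀ large so that the score is huge, contradiction
    set K : ℝ := (B + (S θb - S θa) + 1) / ((n : ℝ) * (θb - θa)) with hK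
    have hnpos : (0:ℝ) < (n : ℝ) * (θb - θa) :=
      mul_pos (by exact_mod_cast hn) (sub_pos.mpr hab)
    obtain ⟨x₀, hx₀⟩ := ((hψtop θa haΘ).eventually (eventually_ge_atTop K)).exists
    -- convexity: supporting line at θa
    have hslope : ψ x₀ θa ≤ (ρ x₀ θb - ρ x₀ θa) / (θb - θa) := by
      have := (hconv x₀).le_slope_of_hasDerivAt (Set.mem_univ θa) (Set.mem_univ θb)
        hab (hderiv x₀ θa)
      simpa [slope_def_field, div_sub_div_same] using this
    have hrho : K * (θb - θa) ≤ ρ x₀ θb - ρ x₀ θa := by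
      have h4 : K * (θb - θa) ≤ ψ x₀ θa * (θb - θa) :=
        mul_le_mul_of_nonneg_right hx₀ (sub_pos.mpr hab).le
      have h5 : ψ x₀ θa * (θb - θa) ≤ ρ x₀ θb - ρ x₀ θa := by
        rw [← le_div_iff₀ (sub_pos.mpr hab)]
        exact hslope
      linarith
    have hKval : (n : ℝ) * (K * (θb - θa)) = B + (S θb - S θa) + 1 := by
      rw [hK]; field_simp [(sub_pos.mpr hab).ne']
    have hLlarge : B + 1 ≤ (S θa - S θb) + (n : ℝ) * (ρ x₀ θb - ρ x₀ θa) := by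
      have h6 : (n : ℝ) * (K * (θb - θa)) ≤ (n : ℝ) * (ρ x₀ θb - ρ x₀ θa) :=
        mul_le_mul_of_nonneg_left hrho (Nat.cast_nonneg n)
      linarith [hKval ▸ h6]
    have := hbound x₀
    have := le_abs_self ((S θa - S θb) + (n : ℝ) * (ρ x₀ θb - ρ x₀ θa))
    linarith
  rcases lt_or_gt_of_ne hne with h | h
  · exact key θ₁ h₁Θ θ₂ h₂Θ h hw₁ hw₂
  · exact key θ₂ h₂Θ θ₁ h₁Θ h hw₂ hw₁
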